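/- Let h > 0, let n ≥ 1 be an integer, and let t, y ∈ ℝ. Then Σ_{j=−n}^{n} | sinc( (t + iy − jh)/h ) | ≤ (2·cosh(πy/h)/π)·( π + 1 + log n ). -/

import Mathlib

noncomputable section

/-- The normalized sinc function on `ℂ`: `sinc z = sin(πz)/(πz)` for `z ≠ 0`,
`sinc 0 = 1`. -/
def csinc (z : ℂ) : ℂ :=
  if z = 0 then 1 else Complex.sin (Real.pi * z) / (Real.pi * z)

end

open Real Complex Finset

section Aux

lemma aux_sinh_le {x : ℝ} (hx : 0 ≤ x) : Real.sinh x ≤ x * Real.cosh x := by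
  have hmono : MonotoneOn (fun x : ℝ => x * Real.cosh x - Real.sinh x) (Set.Ici 0) := by
    apply monotoneOn_of_deriv_nonneg (convex_Ici 0)
    · fun_prop
    · fun_prop
    · intro z hz
      rw [interior_Ici, Set.mem_Ioi] at hz
      have hd : HasDerivAt (fun x : ℝ => x * Real.cosh x - Real.sinh x)
          (1 * Real.cosh z + z * Real.sinh z - Real.cosh z) z :=
        ((hasDerivAt_id z).mul (Real.hasDerivAt_cosh z)).sub (Real.hasDerivAt_sinh z)
      rw [hd.deriv]
      have := Real.sinh_nonneg_iff.mpr hz.le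
      nlinarith
  have h0 := hmono (Set.self_mem_Ici) hx hx
  simp at h0
  linarith

lemma aux_abs_sin_sq (a b : ℝ) :
    (‖Complex.sin (a + b * Complex.I)‖)^2
      = (Real.sin a)^2 * (Real.cosh b)^2 + (Real.cos a)^2 * (Real.sinh b)^2 := by
  have : Complex.sin (a + b * Complex.I)
      = ((Real.sin a * Real.cosh b : ℝ) : ℂ) + ((Real.cos a * Real.sinh b : ℝ) : ℂ) * Complex.I := by
    rw [Complex.sin_add, Complex.sin_mul_I, Complex.cos_mul_I]
    push_cast [← Complex.ofReal_sin, ← Complex.ofReal_cos, ← Complex.ofReal_sinh,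
      ← Complex.ofReal_cosh]
    ring
  rw [this, Complex.norm_add_mul_I, Real.sq_sqrt (by positivity)]
  ring

lemma aux_abs_sin_le (w : ℂ) : ‖Complex.sin w‖ ≤ Real.cosh w.im := by
  have h1 : (‖Complex.sin w‖)^2 ≤ (Real.cosh w.im)^2 := by
    have := aux_abs_sin_sq w.re w.im
    rw [Complex.re_add_im] at this
    rw [this]
    have hs2 : (Real.sinh w.im)^2 ≤ (Real.cosh w.im)^2 := by
      nlinarith [Real.sinh_lt_cosh w.im, Real.cosh_add_sinh w.im, Real.exp_pos w.im]
    nlinarith [Real.sin_sq_add_cos_sq w.re,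
      mul_le_mul_of_nonneg_left hs2 (sq_nonneg (Real.cos w.re)),
      mul_le_mul_of_nonneg_right (Real.sin_sq_le_one w.re) (sq_nonneg (Real.cosh w.im)),
      sq_nonneg (Real.cos w.re)]
  calc ‖Complex.sin w‖ = √((‖Complex.sin w‖)^2) := by
        rw [Real.sqrt_sq (norm_nonneg _)]
    _ ≤ √((Real.cosh w.im)^2) := Real.sqrt_le_sqrt h1
    _ = Real.cosh w.im := Real.sqrt_sq (Real.cosh_pos _).le

lemma aux_abs_sin_le' (w : ℂ) :
    ‖Complex.sin w‖ ≤ ‖w‖ * Real.cosh w.im := by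
  have hsinh : (Real.sinh w.im)^2 ≤ w.im^2 * (Real.cosh w.im)^2 := by
    have h1 : Real.sinh |w.im| ≤ |w.im| * Real.cosh |w.im| := aux_sinh_le (abs_nonneg _)
    have h2 : |Real.sinh w.im| = Real.sinh |w.im| := Real.abs_sinh _
    have h3 : Real.cosh |w.im| = Real.cosh w.im := Real.cosh_abs _
    calc (Real.sinh w.im)^2 = (|Real.sinh w.im|)^2 := (_root_.sq_abs _).symm
      _ ≤ (|w.im| * Real.cosh w.im)^2 := by
          apply pow_le_pow_left₀ (abs_nonneg _); rw [h2, ← h3]; exact h1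
      _ = w.im^2 * (Real.cosh w.im)^2 := by rw [mul_pow, _root_.sq_abs]
  have hsin : (Real.sin w.re)^2 ≤ w.re^2 := by
    simpa [_root_.sq_abs] using pow_le_pow_left₀ (abs_nonneg (Real.sin w.re)) (Real.abs_sin_le_abs) 2
  have h1 : (‖Complex.sin w‖)^2 ≤ (‖w‖ * Real.cosh w.im)^2 := by
    have := aux_abs_sin_sq w.re w.im
    rw [Complex.re_add_im] at this
    rw [this, mul_pow, Complex.sq_norm, Complex.normSq_apply]
    have hc := Real.cosh_pos w.im
    nlinarith [hsinh, mul_le_mul_of_nonneg_right hsin (sq_nonneg (Real.cosh w.im)),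
      mul_le_mul_of_nonneg_right (Real.cos_sq_le_one w.re) (sq_nonneg (Real.sinh w.im))]
  calc ‖Complex.sin w‖ = √((‖Complex.sin w‖)^2) := by
        rw [Real.sqrt_sq (norm_nonneg _)]
    _ ≤ √((‖w‖ * Real.cosh w.im)^2) := Real.sqrt_le_sqrt h1
    _ = ‖w‖ * Real.cosh w.im := Real.sqrt_sq (by positivity)

lemma csinc_le (z : ℂ) : ‖csinc z‖ ≤ Real.cosh (π * z.im) := by
  by_cases hz : z = 0
  · simp [csinc, hz, Real.one_le_cosh]
  · rw [csinc, if_neg hz]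
    have him : ((Real.pi : ℂ) * z).im = π * z.im := by simp
    have habs : ‖(Real.pi : ℂ) * z‖ = π * ‖z‖ := by
      rw [norm_mul, Complex.norm_real, Real.norm_eq_abs, abs_of_pos Real.pi_pos]
    have h := aux_abs_sin_le' ((Real.pi : ℂ) * z)
    rw [him, habs] at h
    rw [norm_div, habs]
    have hz' : 0 < ‖z‖ := norm_pos_iff.mpr hz
    rw [div_le_iff₀ (by positivity)]
    calc ‖Complex.sin ((Real.pi:ℂ) * z)‖ ≤ π * ‖z‖ * Real.cosh (π * z.im) := h
      _ = Real.cosh (π * z.im) * (π * ‖z‖) := by ring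

lemma csinc_le' (z : ℂ) {k : ℝ} (hk : 0 < k) (hre : k ≤ |z.re|) :
    ‖csinc z‖ ≤ Real.cosh (π * z.im) / (π * k) := by
  have hz : z ≠ 0 := by
    intro h; rw [h] at hre; simp at hre; linarith
  rw [csinc, if_neg hz]
  have him : ((Real.pi : ℂ) * z).im = π * z.im := by simp
  have habs : ‖(Real.pi : ℂ) * z‖ = π * ‖z‖ := by
    rw [norm_mul, Complex.norm_real, Real.norm_eq_abs, abs_of_pos Real.pi_pos]
  have h := aux_abs_sin_le ((Real.pi : ℂ) * z)
  rw [him] at h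
  rw [norm_div, habs]
  have hzk : k ≤ ‖z‖ := hre.trans (Complex.abs_re_le_norm z)
  have hz' : 0 < ‖z‖ := lt_of_lt_of_le hk hzk
  calc ‖Complex.sin ((Real.pi:ℂ) * z)‖ / (π * ‖z‖)
      ≤ Real.cosh (π * z.im) / (π * ‖z‖) :=
        div_le_div_of_nonneg_right h (by positivity)
    _ ≤ Real.cosh (π * z.im) / (π * k) :=
        div_le_div_of_nonneg_left (Real.cosh_pos _).le (by positivity)
          (by nlinarith [Real.pi_pos])

noncomputable def Bf (i : ℤ) : ℝ := if i ≤ 0 then 1 else 1 / (π * i)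

lemma Bf_nonneg (i : ℤ) : 0 ≤ Bf i := by
  unfold Bf
  split
  · norm_num
  · next h =>
    have : (0:ℝ) < i := by exact_mod_cast not_le.mp h
    positivity

lemma sumB_range (K : ℕ) :
    ∑ i ∈ Finset.range (K+1), Bf (i : ℤ) = 1 + (1/π) * (harmonic K : ℝ) := by
  induction K with
  | zero => simp [Bf]
  | succ K ih =>
    rw [Finset.sum_range_succ, ih, harmonic_succ]
    have h1 : Bf ((K:ℤ)+1) = 1/(π * (K+1)) := by
      rw [Bf, if_neg (by omega)]
      push_cast; ring_nf
    push_cast [h1]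
    field_simp
    ring

lemma sumB_int (M : ℤ) :
    ∑ i ∈ Finset.Icc (0:ℤ) M, Bf i ≤ 1 + (1/π) * (harmonic M.toNat : ℝ) := by
  rcases le_or_gt 0 M with hM | hM
  · have : ∑ i ∈ Finset.Icc (0:ℤ) M, Bf i = ∑ i ∈ Finset.range (M.toNat + 1), Bf (i : ℤ) := by
      refine Finset.sum_nbij' (fun i => i.toNat) (fun i => (i : ℤ)) ?_ ?_ ?_ ?_ ?_
      · intro a ha; simp only [Finset.mem_Icc] at ha; simp only [Finset.mem_range]; omega
      · intro a ha; simp only [Finset.mem_range] at ha; simp only [Finset.mem_Icc]; omega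
      · intro a ha; simp only [Finset.mem_Icc] at ha; omega
      · intro a ha; simp
      · intro a ha; simp only [Finset.mem_Icc] at ha
        congr 1; omega
    rw [this, sumB_range]
  · rw [Finset.Icc_eq_empty (by omega), Finset.sum_empty]
    have hh : (0:ℚ) ≤ harmonic M.toNat := by
      rcases Nat.eq_zero_or_pos M.toNat with h | h
      · simp [h, harmonic_zero]
      · exact (harmonic_pos h.ne').le
    have hh' : (0:ℝ) ≤ (harmonic M.toNat : ℝ) := by exact_mod_cast hh
    have hp : (0:ℝ) ≤ (1/π) * (harmonic M.toNat : ℝ) := by positivity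
    linarith

lemma harmonic_two_bound (M1 M2 n : ℕ) (hn : 1 ≤ n) (hs : M1 + M2 ≤ 2*n) :
    (harmonic M1 : ℝ) + (harmonic M2 : ℝ) ≤ 2 + 2 * Real.log n := by
  have hlogn : 0 ≤ Real.log n := Real.log_nonneg (by exact_mod_cast hn)
  have hlog2 : Real.log 2 ≤ 1 := by
    have := Real.log_two_lt_d9
    linarith
  have key : ∀ M : ℕ, M ≤ 2*n → (harmonic M : ℝ) ≤ 2 + 2 * Real.log n := by
    intro M hM
    rcases Nat.eq_zero_or_pos M with h0 | h0
    · simp [h0, harmonic_zero]; positivity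
    · calc (harmonic M : ℝ) ≤ 1 + Real.log M := harmonic_le_one_add_log M
        _ ≤ 1 + Real.log (2*n) := by
            have : Real.log M ≤ Real.log (2*n) := by
              apply Real.log_le_log (by exact_mod_cast h0)
              exact_mod_cast hM
            linarith
        _ = 1 + (Real.log 2 + Real.log n) := by
            rw [Real.log_mul (by norm_num) (by positivity)]
        _ ≤ 2 + 2 * Real.log n := by linarith
  rcases Nat.eq_zero_or_pos M1 with h1 | h1
  · simp only [h1, harmonic_zero, Rat.cast_zero, zero_add]
    exact key M2 (by omega)
  rcases Nat.eq_zero_or_pos M2 with h2 | h2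
  · simp only [h2, harmonic_zero, Rat.cast_zero, add_zero]
    exact key M1 (by omega)
  have b1 : (harmonic M1 : ℝ) ≤ 1 + Real.log M1 := harmonic_le_one_add_log M1
  have b2 : (harmonic M2 : ℝ) ≤ 1 + Real.log M2 := harmonic_le_one_add_log M2
  have hprod : (M1 : ℝ) * M2 ≤ (n:ℝ)^2 := by
    have : (M1:ℤ) * M2 ≤ (n:ℤ)^2 := by
      have hs' : (M1:ℤ) + M2 ≤ 2*n := by exact_mod_cast hs
      nlinarith [sq_nonneg ((M1:ℤ) - M2)]
    exact_mod_cast this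
  have : Real.log M1 + Real.log M2 ≤ 2 * Real.log n := by
    rw [← Real.log_mul (by exact_mod_cast h1.ne') (by exact_mod_cast h2.ne')]
    calc Real.log ((M1:ℝ) * M2) ≤ Real.log ((n:ℝ)^2) := by
          apply Real.log_le_log (by positivity) hprod
      _ = 2 * Real.log n := by rw [Real.log_pow]; push_cast; ring
  linarith

lemma sum_shift (a b c : ℤ) :
    ∑ j ∈ Finset.Icc a b, Bf (j - c) = ∑ i ∈ Finset.Icc (a - c) (b - c), Bf i := by
  refine Finset.sum_nbij' (fun j => j - c) (fun i => i + c) ?_ ?_ ?_ ?_ ?_ <;>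
    intro j hj <;> simp only [Finset.mem_Icc] at * <;> omega

lemma sum_refl (a b c : ℤ) :
    ∑ j ∈ Finset.Icc a b, Bf (c - j) = ∑ i ∈ Finset.Icc (c - b) (c - a), Bf i := by
  refine Finset.sum_nbij' (fun j => c - j) (fun i => c - i) ?_ ?_ ?_ ?_ ?_ <;>
    intro j hj <;> simp only [Finset.mem_Icc] at * <;> omega

end Aux

/-- bound on the sum of `|sinc((t + iy - jh)/h)|`. -/
theorem stmt_6 (h : ℝ) (hh : 0 < h) (n : ℕ) (hn : 1 ≤ n) (t y : ℝ) :
    ∑ j ∈ Finset.Icc (-(n : ℤ)) (n : ℤ),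
        ‖csinc (((t : ℂ) + Complex.I * (y : ℂ) - (j : ℂ) * (h : ℂ)) / (h : ℂ))‖
      ≤ 2 * Real.cosh (Real.pi * y / h) / Real.pi * (Real.pi + 1 + Real.log n) := by
  set x : ℝ := t / h with hxdef
  set c : ℤ := max (-(n:ℤ)) (min ((n:ℤ)+1) ⌈x⌉) with hcdef
  have hcn : -(n:ℤ) ≤ c := le_max_left _ _
  have hcn' : c ≤ (n:ℤ)+1 := by omega
  set C : ℝ := Real.cosh (π * y / h) with hCdef
  have hC1 : (1:ℝ) ≤ C := Real.one_le_cosh _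
  have hC0 : (0:ℝ) < C := lt_of_lt_of_le one_pos hC1
  have hh0 : (h:ℂ) ≠ 0 := by exact_mod_cast hh.ne'
  have hzform : ∀ j : ℤ, ((t : ℂ) + Complex.I * (y : ℂ) - (j : ℂ) * (h : ℂ)) / (h : ℂ)
      = ((x - j : ℝ) : ℂ) + ((y/h : ℝ) : ℂ) * Complex.I := by
    intro j
    rw [div_eq_iff hh0, hxdef]
    push_cast
    field_simp
    ring
  have hterm : ∀ j ∈ Finset.Icc (-(n:ℤ)) (n:ℤ),
      ‖csinc (((t : ℂ) + Complex.I * (y : ℂ) - (j : ℂ) * (h : ℂ)) / (h : ℂ))‖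
        ≤ C * (if c ≤ j then Bf (j - c) else Bf (c - 1 - j)) := by
    intro j hj
    rw [Finset.mem_Icc] at hj
    rw [hzform j]
    set z : ℂ := ((x - j : ℝ) : ℂ) + ((y/h : ℝ) : ℂ) * Complex.I with hz
    have hre : z.re = x - j := by simp [hz]
    have him : z.im = y / h := by simp [hz]
    have hcoshz : Real.cosh (π * z.im) = C := by rw [him, hCdef, mul_div_assoc]
    by_cases hcj : c ≤ j
    · rw [if_pos hcj]
      by_cases hi : j - c ≤ 0
      · rw [Bf, if_pos hi, mul_one]
        calc ‖csinc z‖ ≤ Real.cosh (π * z.im) := csinc_le z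
          _ = C := hcoshz
      · push_neg at hi
        have hxc : x ≤ (c:ℝ) := by
          rcases le_or_gt ⌈x⌉ ((n:ℤ)+1) with hle | hgt
          · have h1 : ⌈x⌉ ≤ c := by omega
            calc x ≤ (⌈x⌉ : ℝ) := Int.le_ceil x
              _ ≤ (c:ℝ) := by exact_mod_cast h1
          · exfalso; omega
        have hcjr : (c:ℝ) ≤ (j:ℝ) := by exact_mod_cast hcj
        have hk : ((j - c : ℤ) : ℝ) ≤ |z.re| := by
          rw [hre, abs_of_nonpos (by linarith)]
          push_cast
          linarith
        have hk0 : (0:ℝ) < ((j - c : ℤ) : ℝ) := by exact_mod_cast hi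
        have hb := csinc_le' z hk0 hk
        rw [hcoshz] at hb
        calc ‖csinc z‖ ≤ C / (π * ((j-c:ℤ):ℝ)) := hb
          _ = C * Bf (j - c) := by
            rw [Bf, if_neg (by omega), mul_one_div]
    · rw [if_neg hcj]
      push_neg at hcj
      have hc1x : (c:ℝ) - 1 ≤ x := by
        rcases le_or_gt (-(n:ℤ)) ⌈x⌉ with hge | hlt
        · have h1 : c ≤ ⌈x⌉ := by omega
          have h2 : (c:ℝ) ≤ (⌈x⌉:ℝ) := by exact_mod_cast h1
          have h3 : (⌈x⌉:ℝ) < x + 1 := Int.ceil_lt_add_one x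
          linarith
        · exfalso; omega
      by_cases hi : c - 1 - j ≤ 0
      · rw [Bf, if_pos hi, mul_one]
        calc ‖csinc z‖ ≤ Real.cosh (π * z.im) := csinc_le z
          _ = C := hcoshz
      · push_neg at hi
        have hjc1 : (j:ℝ) + 1 ≤ (c:ℝ) := by exact_mod_cast (by omega : j + 1 ≤ c)
        have hk : ((c - 1 - j : ℤ) : ℝ) ≤ |z.re| := by
          rw [hre, _root_.abs_of_nonneg (by linarith)]
          push_cast
          linarith
        have hk0 : (0:ℝ) < ((c - 1 - j : ℤ) : ℝ) := by exact_mod_cast hi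
        have hb := csinc_le' z hk0 hk
        rw [hcoshz] at hb
        calc ‖csinc z‖ ≤ C / (π * ((c-1-j:ℤ):ℝ)) := hb
          _ = C * Bf (c - 1 - j) := by
            rw [Bf, if_neg (by omega), mul_one_div]
  have hfilter1 : (Finset.Icc (-(n:ℤ)) (n:ℤ)).filter (fun j => c ≤ j) = Finset.Icc c (n:ℤ) := by
    ext j
    simp only [Finset.mem_filter, Finset.mem_Icc]
    omega
  have hfilter2 : (Finset.Icc (-(n:ℤ)) (n:ℤ)).filter (fun j => ¬ c ≤ j)
      = Finset.Icc (-(n:ℤ)) (c-1) := by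
    ext j
    simp only [Finset.mem_filter, Finset.mem_Icc]
    omega
  have hsplit : ∑ j ∈ Finset.Icc (-(n:ℤ)) (n:ℤ), (if c ≤ j then Bf (j - c) else Bf (c - 1 - j))
      = (∑ i ∈ Finset.Icc (0:ℤ) ((n:ℤ) - c), Bf i)
        + ∑ i ∈ Finset.Icc (0:ℤ) (c - 1 + (n:ℤ)), Bf i := by
    have e1 : Finset.Icc (c - c) ((n:ℤ) - c) = Finset.Icc (0:ℤ) ((n:ℤ) - c) := by
      rw [sub_self]
    have e2 : Finset.Icc ((c-1) - (c-1)) ((c-1) - -(n:ℤ)) = Finset.Icc (0:ℤ) (c - 1 + (n:ℤ)) := by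
      rw [sub_self, sub_neg_eq_add]
    rw [Finset.sum_ite, hfilter1, hfilter2, sum_shift c (n:ℤ) c, e1,
      sum_refl (-(n:ℤ)) (c-1) (c-1), e2]
  set M1 : ℤ := (n:ℤ) - c with hM1
  set M2 : ℤ := c - 1 + (n:ℤ) with hM2
  have hsum1 := sumB_int M1
  have hsum2 := sumB_int M2
  have hharm := harmonic_two_bound M1.toNat M2.toNat n hn (by omega)
  have hπ : (0:ℝ) < π := Real.pi_pos
  calc ∑ j ∈ Finset.Icc (-(n:ℤ)) (n:ℤ),
        ‖csinc (((t : ℂ) + Complex.I * (y : ℂ) - (j : ℂ) * (h : ℂ)) / (h : ℂ))‖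
      ≤ ∑ j ∈ Finset.Icc (-(n:ℤ)) (n:ℤ),
          C * (if c ≤ j then Bf (j - c) else Bf (c - 1 - j)) := Finset.sum_le_sum hterm
    _ = C * ∑ j ∈ Finset.Icc (-(n:ℤ)) (n:ℤ),
          (if c ≤ j then Bf (j - c) else Bf (c - 1 - j)) := by rw [Finset.mul_sum]
    _ = C * ((∑ i ∈ Finset.Icc (0:ℤ) M1, Bf i) + ∑ i ∈ Finset.Icc (0:ℤ) M2, Bf i) := by
        rw [hsplit]
    _ ≤ C * ((1 + (1/π) * (harmonic M1.toNat : ℝ)) + (1 + (1/π) * (harmonic M2.toNat : ℝ))) := by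
        apply mul_le_mul_of_nonneg_left (by linarith) hC0.le
    _ = C * (2 + (1/π) * ((harmonic M1.toNat : ℝ) + (harmonic M2.toNat : ℝ))) := by ring
    _ ≤ C * (2 + (1/π) * (2 + 2 * Real.log n)) := by
        apply mul_le_mul_of_nonneg_left _ hC0.le
        have h1π : (0:ℝ) < 1/π := by positivity
        nlinarith [hharm]
    _ = 2 * C / π * (π + 1 + Real.log n) := by
        field_simp
        ring
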